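/- For every graph G and every non-negative integer k ≤ μ(G), there exists a graph H such that G is a subgraph of H, I(H; x) is symmetric, and I(G ∘ 2K₁; x) = (1+x)^k · I(H; x). -/

import Mathlib

open Polynomial

open scoped Classical in
/-- The independence polynomial of a finite simple graph. -/
noncomputable def indepPoly {V : Type*} [Fintype V] (G : SimpleGraph V) : Polynomial ℤ :=
  ∑ s : Finset V, if (s : Set V).Pairwise (fun u v => ¬ G.Adj u v) then X ^ s.card else 0

/-- A polynomial is palindromic (symmetric). -/
def IsPalindromic (p : Polynomial ℤ) : Prop :=
  ∀ j ≤ p.natDegree, p.coeff j = p.coeff (p.natDegree - j)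

/-- Corona of two graphs. -/
def corona {V W : Type*} (G : SimpleGraph V) (H : SimpleGraph W) : SimpleGraph (V ⊕ V × W) where
  Adj x y :=
    match x, y with
    | .inl u, .inl v => G.Adj u v
    | .inl u, .inr (v, _) => u = v
    | .inr (v, _), .inl u => u = v
    | .inr (u, a), .inr (v, b) => u = v ∧ H.Adj a b
  symm := by
    constructor
    rintro (u | ⟨u, a⟩) (v | ⟨v, b⟩) h
    · exact G.adj_symm h
    · exact h
    · exact h
    · exact ⟨h.1.symm, h.2.symm⟩
  loopless := by
    constructor
    rintro (u | ⟨u, a⟩) h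
    · exact G.irrefl h
    · exact H.irrefl h.2

section Helpers
open Finset
open scoped Classical
set_option maxHeartbeats 1600000

open Polynomial Finset
open scoped Classical

lemma sum_pow_card_powerset {α : Type*} (F : Finset α) :
    ∑ B ∈ F.powerset, (X : Polynomial ℤ) ^ B.card = (1 + X) ^ F.card := by
  have := Finset.prod_add (fun _ : α => (X : Polynomial ℤ)) (fun _ => 1) F
  simp only [Finset.prod_const, Finset.prod_const_one, mul_one, one_pow] at this
  rw [add_comm, ← this]

def finsetSumEquiv {α β : Type*} : Finset α × Finset β ≃ Finset (α ⊕ β) where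
  toFun := fun q => q.1.disjSum q.2
  invFun := fun s => (s.toLeft, s.toRight)
  left_inv := fun q => by simp
  right_inv := fun s => Finset.toLeft_disjSum_toRight

lemma ite_inst {α : Sort*} {p q : Prop} {i : Decidable p} {j : Decidable q} {a b : α}
    (h : p = q) : @ite α p i a b = @ite α q j a b := by
  subst h; rw [Subsingleton.elim i j]

lemma indepPoly_cone {V P : Type*} [Fintype V] [Fintype P]
    (K : SimpleGraph (V ⊕ P)) (G : SimpleGraph V) (R : V → P → Prop)
    (h1 : ∀ u v, K.Adj (Sum.inl u) (Sum.inl v) ↔ G.Adj u v)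
    (h2 : ∀ u p, K.Adj (Sum.inl u) (Sum.inr p) ↔ R u p)
    (h3 : ∀ p q, ¬ K.Adj (Sum.inr p) (Sum.inr q)) :
    indepPoly K = ∑ A : Finset V,
      if (A : Set V).Pairwise (fun u v => ¬ G.Adj u v)
      then X ^ A.card * (1 + X) ^ (Finset.univ.filter (fun p => ∀ v ∈ A, ¬ R v p)).card
      else 0 := by
  have key : ∀ (A : Finset V) (B : Finset P),
      ((A.disjSum B : Finset (V ⊕ P)) : Set (V ⊕ P)).Pairwise (fun u v => ¬ K.Adj u v)
      ↔ ((A : Set V).Pairwise (fun u v => ¬ G.Adj u v) ∧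
          B ⊆ Finset.univ.filter (fun p => ∀ v ∈ A, ¬ R v p)) := by
    intro A B
    constructor
    · intro h
      refine ⟨fun u hu v hv huv => ?_, fun p hp => ?_⟩
      · have := @h (Sum.inl u) (by simpa using hu) (Sum.inl v) (by simpa using hv)
          (by simpa using huv)
        exact fun hG => this ((h1 u v).mpr hG)
      · simp only [mem_filter, mem_univ, true_and]
        intro v hv
        have := @h (Sum.inl v) (by simpa using hv) (Sum.inr p) (by simpa using hp) (by simp)
        exact fun hR => this ((h2 v p).mpr hR)
    · rintro ⟨hA, hB⟩ x hx y hy hxy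
      rcases x with u | p <;> rcases y with v | q
      · rw [Finset.mem_coe, Finset.inl_mem_disjSum] at hx hy
        rw [h1]
        exact hA hx hy (by simpa using hxy)
      · rw [Finset.mem_coe, Finset.inl_mem_disjSum] at hx
        rw [Finset.mem_coe, Finset.inr_mem_disjSum] at hy
        rw [h2]
        have := hB hy
        simp only [mem_filter, mem_univ, true_and] at this
        exact this u hx
      · rw [Finset.mem_coe, Finset.inr_mem_disjSum] at hx
        rw [Finset.mem_coe, Finset.inl_mem_disjSum] at hy
        intro hadj
        have := hB hx
        simp only [mem_filter, mem_univ, true_and] at this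
        exact this v hy ((h2 v p).mp (K.adj_symm hadj))
      · exact h3 p q
  unfold indepPoly
  refine Eq.trans (b := ∑ q : Finset V × Finset P,
      if ((q.1.disjSum q.2 : Finset (V ⊕ P)) : Set (V ⊕ P)).Pairwise (fun u v => ¬ K.Adj u v)
      then (X : Polynomial ℤ) ^ (q.1.disjSum q.2).card else 0) ?_ ?_
  · refine (Fintype.sum_equiv (finsetSumEquiv (α := V) (β := P)) _ _ ?_).symm
    exact fun q => ite_inst rfl
  rw [Fintype.sum_prod_type]
  refine Finset.sum_congr rfl fun A _ => ?_
  by_cases hA : (A : Set V).Pairwise (fun u v => ¬ G.Adj u v)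
  · rw [if_pos hA]
    set F := Finset.univ.filter (fun p => ∀ v ∈ A, ¬ R v p) with hF
    have hterm : ∀ B : Finset P,
        (if ((A.disjSum B : Finset (V ⊕ P)) : Set (V ⊕ P)).Pairwise (fun u v => ¬ K.Adj u v)
          then (X : Polynomial ℤ) ^ (A.disjSum B).card else 0)
        = if B ∈ F.powerset then (X : Polynomial ℤ) ^ A.card * X ^ B.card else 0 := by
      intro B
      rw [Finset.card_disjSum, pow_add]
      exact if_congr (by rw [key A B, Finset.mem_powerset]; simp [hA, hF]) rfl rfl
    rw [Finset.sum_congr rfl (fun B _ => hterm B), ← Finset.sum_filter,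
      Finset.filter_mem_eq_inter, Finset.univ_inter, ← Finset.mul_sum,
      sum_pow_card_powerset]
  · rw [if_neg hA]
    refine Finset.sum_eq_zero fun B _ => ?_
    rw [if_neg]
    rw [key]
    tauto


lemma card_filter_sum_univ {A B : Type*} [Fintype A] [Fintype B] (p : A ⊕ B → Prop)
    [DecidablePred p] [DecidablePred fun a => p (Sum.inl a)]
    [DecidablePred fun b => p (Sum.inr b)] :
    (univ.filter p).card
      = (univ.filter fun a => p (Sum.inl a)).card + (univ.filter fun b => p (Sum.inr b)).card := by
  rw [← Finset.univ_disjSum_univ, ← Finset.card_disjSum]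
  congr 1
  ext (x | x) <;> simp

lemma card_filter_subtype {α : Type*} [Fintype α] (s : Finset α) (p : α → Prop)
    [DecidablePred p] [DecidablePred fun x : {v // v ∈ s} => p x.1] :
    (univ.filter fun x : {v // v ∈ s} => p x.1).card = (s.filter p).card := by
  apply Finset.card_bij (fun x _ => x.1)
  · intro a ha
    simp only [mem_filter, mem_univ, true_and] at ha
    simp [a.2, ha]
  · intro a _ b _ h
    exact Subtype.ext h
  · intro b hb
    simp only [mem_filter] at hb
    exact ⟨⟨b, hb.1⟩, by simp [hb.2], rfl⟩

lemma matched_count {V : Type*} [Fintype V] (M : Finset (V × V)) (A : Finset V)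
    (hadj : ∀ e ∈ M, e.1 ≠ e.2)
    (hpw : (M : Set (V × V)).Pairwise fun e f =>
        e.1 ≠ f.1 ∧ e.1 ≠ f.2 ∧ e.2 ≠ f.1 ∧ e.2 ≠ f.2)
    (hind : ∀ e ∈ M, ¬(e.1 ∈ A ∧ e.2 ∈ A)) :
    ((univ : Finset V) \ A).card
      = (((univ : Finset V) \ M.biUnion fun e => {e.1, e.2}) \ A).card
        + (M.filter fun e => e.1 ∉ A ∧ e.2 ∉ A).card + M.card := by
  classical
  set matched := M.biUnion fun e => ({e.1, e.2} : Finset V) with hmatched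
  have hdisj : ∀ x ∈ M, ∀ y ∈ M, x ≠ y →
      Disjoint (({x.1, x.2} : Finset V) \ A) (({y.1, y.2} : Finset V) \ A) := by
    intro x hx y hy hxy
    have h := hpw hx hy hxy
    rw [Finset.disjoint_left]
    intro a ha hb
    simp only [mem_sdiff, mem_insert, mem_singleton] at ha hb
    rcases ha.1 with h1 | h1 <;> rcases hb.1 with h2 | h2 <;> subst h1 <;>
      simp_all
  have hsplit : (univ : Finset V) \ A = ((univ \ matched) \ A) ∪ (matched \ A) := by
    ext v; simp only [mem_sdiff, mem_union, mem_univ, true_and]; tauto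
  have hdd : Disjoint ((univ \ matched) \ A) (matched \ A) := by
    rw [Finset.disjoint_left]
    intro a ha hb
    simp only [mem_sdiff] at ha hb
    exact ha.1.2 hb.1
  rw [hsplit, Finset.card_union_of_disjoint hdd]
  have hb : (matched \ A).card = (M.filter fun e => e.1 ∉ A ∧ e.2 ∉ A).card + M.card := by
    have h2 : matched \ A = M.biUnion fun e => (({e.1, e.2} : Finset V) \ A) := by
      ext v
      simp only [hmatched, mem_sdiff, Finset.mem_biUnion]
      tauto
    rw [h2, Finset.card_biUnion hdisj]
    have h3 : ∀ e ∈ M, (({e.1, e.2} : Finset V) \ A).card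
        = (if e.1 ∉ A ∧ e.2 ∉ A then 1 else 0) + 1 := by
      intro e he
      by_cases h1 : e.1 ∈ A <;> by_cases h2 : e.2 ∈ A
      · exact absurd ⟨h1, h2⟩ (hind e he)
      · have : ({e.1, e.2} : Finset V) \ A = {e.2} := by
          ext v; simp only [mem_sdiff, mem_insert, mem_singleton]
          constructor
          · rintro ⟨h | h, hv⟩ <;> simp_all
          · rintro rfl; exact ⟨Or.inr rfl, h2⟩
        rw [this, Finset.card_singleton, if_neg (fun hc => hc.1 h1)]
      · have : ({e.1, e.2} : Finset V) \ A = {e.1} := by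
          ext v; simp only [mem_sdiff, mem_insert, mem_singleton]
          constructor
          · rintro ⟨h | h, hv⟩ <;> simp_all
          · rintro rfl; exact ⟨Or.inl rfl, h1⟩
        rw [this, Finset.card_singleton, if_neg (fun hc => hc.2 h2)]
      · have heq : ({e.1, e.2} : Finset V) \ A = {e.1, e.2} := by
          ext v; simp only [mem_sdiff, mem_insert, mem_singleton]
          constructor
          · rintro ⟨h, hv⟩; exact h
          · rintro (rfl | rfl)
            · exact ⟨Or.inl rfl, h1⟩
            · exact ⟨Or.inr rfl, h2⟩
        rw [heq, Finset.card_pair (hadj e he), if_pos ⟨h1, h2⟩]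
    rw [Finset.sum_congr rfl h3, Finset.sum_add_distrib, Finset.sum_const, smul_eq_mul, mul_one,
      Finset.card_filter]
  rw [hb, add_assoc]

lemma coeff_term (a c j : ℕ) :
    ((X : Polynomial ℤ) ^ a * (1 + X) ^ c).coeff j
      = if a ≤ j then ((c.choose (j - a) : ℤ)) else 0 := by
  rw [mul_comm, Polynomial.coeff_mul_X_pow']
  split_ifs <;> simp [Polynomial.coeff_one_add_X_pow]

lemma palindromic_aux {ι : Type*} [Fintype ι] (ind : ι → Prop) [DecidablePred ind]
    (a c : ι → ℕ) (d : ℕ)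
    (hd : ∀ i, ind i → c i + 2 * a i = d)
    (i0 : ι) (h0 : ind i0)
    (h0' : ∀ i, ind i → (a i = 0 ↔ i = i0)) :
    (∑ i : ι, if ind i then (X : Polynomial ℤ) ^ a i * (1 + X) ^ c i else 0).natDegree = d ∧
    ∀ j ≤ d, (∑ i : ι, if ind i then (X : Polynomial ℤ) ^ a i * (1 + X) ^ c i else 0).coeff j
      = (∑ i : ι, if ind i then (X : Polynomial ℤ) ^ a i * (1 + X) ^ c i else 0).coeff (d - j) := by
  set q : Polynomial ℤ := ∑ i : ι, if ind i then (X : Polynomial ℤ) ^ a i * (1 + X) ^ c i else 0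
    with hq
  have ha0 : a i0 = 0 := (h0' i0 h0).mpr rfl
  have hc0 : c i0 = d := by have := hd i0 h0; omega
  have hcoeff : ∀ j, q.coeff j = ∑ i : ι,
      if ind i then (if a i ≤ j then ((c i).choose (j - a i) : ℤ) else 0) else 0 := by
    intro j
    rw [hq, Polynomial.finset_sum_coeff]
    refine Finset.sum_congr rfl fun i _ => ?_
    by_cases h : ind i
    · rw [if_pos h, if_pos h, coeff_term]
    · rw [if_neg h, if_neg h, Polynomial.coeff_zero]
  have hcd : q.coeff d = 1 := by
    rw [hcoeff]
    rw [Finset.sum_eq_single i0]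
    · rw [if_pos h0, if_pos (by omega), ha0, hc0]
      simp
    · intro i _ hins
      split_ifs with h1 h2
      · have hane : a i ≠ 0 := fun hz => hins ((h0' i h1).mp hz)
        have hci := hd i h1
        norm_cast
        apply Nat.choose_eq_zero_of_lt
        omega
      · rfl
      · rfl
    · intro h; exact absurd (Finset.mem_univ i0) h
  have hqne : q ≠ 0 := fun h => by simp [h] at hcd
  have hdeg : q.natDegree = d := by
    apply le_antisymm
    · apply Polynomial.natDegree_sum_le_of_forall_le
      intro i _
      split_ifs with h1
      · refine Polynomial.natDegree_mul_le.trans ?_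
        have e1 : ((X : Polynomial ℤ) ^ a i).natDegree ≤ a i := Polynomial.natDegree_pow_le.trans
          (by simp)
        have e2 : (((1 : Polynomial ℤ) + X) ^ c i).natDegree ≤ c i :=
          Polynomial.natDegree_pow_le.trans (by
            have : ((1 : Polynomial ℤ) + X).natDegree ≤ 1 := by
              compute_degree
            nlinarith [this])
        have := hd i h1
        omega
      · simp
    · exact Polynomial.le_natDegree_of_ne_zero (by rw [hcd]; exact one_ne_zero)
  refine ⟨hdeg, fun j hj => ?_⟩
  rw [hcoeff, hcoeff]
  refine Finset.sum_congr rfl fun i _ => ?_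
  split_ifs with h1 h2 h3 h4 h5
  · -- a i ≤ j, a i ≤ d - j
    have hci := hd i h1
    have hle : j - a i ≤ c i := by omega
    rw [show d - j - a i = c i - (j - a i) by omega, Nat.choose_symm hle]
  · -- a i ≤ j, ¬ a i ≤ d - j
    have hci := hd i h1
    norm_cast
    apply Nat.choose_eq_zero_of_lt
    omega
  · -- ¬ a i ≤ j, a i ≤ d - j
    have hci := hd i h1
    symm
    norm_cast
    apply Nat.choose_eq_zero_of_lt
    omega
  · rfl
  · rfl

def coneGraph {V P : Type*} (G : SimpleGraph V) (R : V → P → Prop) : SimpleGraph (V ⊕ P) where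
  Adj x y := match x, y with
    | .inl u, .inl v => G.Adj u v
    | .inl u, .inr p => R u p
    | .inr p, .inl u => R u p
    | .inr _, .inr _ => False
  symm := by
    constructor
    rintro (u | p) (v | q) h
    · exact G.adj_symm h
    · exact h
    · exact h
    · exact h.elim
  loopless := by
    constructor
    rintro (u | p) h
    · exact G.irrefl h
    · exact h
def pendRel {V : Type} {U : Finset V} {M : Finset (V × V)} (u : V)
    (p : V ⊕ ({v : V // v ∈ U} ⊕ {e : V × V // e ∈ M})) : Prop :=
  Sum.elim (fun w => u = w)
    (Sum.elim (fun w => u = w.1) (fun e => u = e.1.1 ∨ u = e.1.2)) p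

@[simp] lemma pendRel_inl {V : Type} {U : Finset V} {M : Finset (V × V)} (u w : V) :
    pendRel (U := U) (M := M) u (Sum.inl w) ↔ u = w := Iff.rfl

@[simp] lemma pendRel_inrl {V : Type} {U : Finset V} {M : Finset (V × V)} (u : V)
    (w : {v : V // v ∈ U}) : pendRel (M := M) u (Sum.inr (Sum.inl w)) ↔ u = w.1 := Iff.rfl

@[simp] lemma pendRel_inrr {V : Type} {U : Finset V} {M : Finset (V × V)} (u : V)
    (e : {e : V × V // e ∈ M}) :
    pendRel (U := U) u (Sum.inr (Sum.inr e)) ↔ (u = e.1.1 ∨ u = e.1.2) := Iff.rfl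

lemma pend_count {V : Type} [Fintype V] (U : Finset V) (M : Finset (V × V)) (A : Finset V) :
    (univ.filter (fun p : V ⊕ ({v : V // v ∈ U} ⊕ {e : V × V // e ∈ M}) =>
        ∀ v ∈ A, ¬ pendRel v p)).card
      = (univ \ A).card + ((U \ A).card + (M.filter fun e => e.1 ∉ A ∧ e.2 ∉ A).card) := by
  rw [card_filter_sum_univ, card_filter_sum_univ]
  congr 1
  · have h1 : (univ.filter fun w : V =>
        ∀ v ∈ A, ¬ pendRel (U := U) (M := M) v (Sum.inl w)) = univ \ A := by
      ext w
      simp only [mem_filter, mem_univ, true_and, mem_sdiff, pendRel_inl]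
      constructor
      · intro h hw; exact h w hw rfl
      · intro h v hv he; exact h (he ▸ hv)
    rw [h1]
  congr 1
  · have h2 : (univ.filter fun w : {v : V // v ∈ U} =>
        ∀ v ∈ A, ¬ pendRel (M := M) v (Sum.inr (Sum.inl w)))
        = (univ.filter fun w : {v : V // v ∈ U} => w.1 ∉ A) := by
      ext w
      simp only [mem_filter, mem_univ, true_and, pendRel_inrl]
      constructor
      · intro h hw; exact h w.1 hw rfl
      · intro h v hv he; exact h (he ▸ hv)
    rw [h2, card_filter_subtype U (fun w => w ∉ A), ← Finset.sdiff_eq_filter]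
  · have h3 : (univ.filter fun e : {e : V × V // e ∈ M} =>
        ∀ v ∈ A, ¬ pendRel (U := U) v (Sum.inr (Sum.inr e)))
        = (univ.filter fun e : {e : V × V // e ∈ M} => e.1.1 ∉ A ∧ e.1.2 ∉ A) := by
      ext e
      simp only [mem_filter, mem_univ, true_and, pendRel_inrr]
      constructor
      · intro h
        exact ⟨fun hin => h e.1.1 hin (Or.inl rfl), fun hin => h e.1.2 hin (Or.inr rfl)⟩
      · rintro ⟨ha, hb⟩ v hv (rfl | rfl)
        · exact ha hv
        · exact hb hv
    rw [h3, card_filter_subtype M (fun e => e.1 ∉ A ∧ e.2 ∉ A)]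

lemma corona_count {V : Type} [Fintype V] (A : Finset V) :
    (univ.filter (fun p : V × Fin 2 => ∀ v ∈ A, ¬ v = p.1)).card = 2 * (univ \ A).card := by
  have h : (univ.filter (fun p : V × Fin 2 => ∀ v ∈ A, ¬ v = p.1))
      = (univ \ A) ×ˢ (univ : Finset (Fin 2)) := by
    ext p
    simp only [mem_filter, mem_univ, true_and, Finset.mem_product, mem_sdiff, and_true]
    constructor
    · intro h hp; exact h p.1 hp rfl
    · intro h v hv he; exact h (he ▸ hv)
  rw [h, Finset.card_product]
  simp [mul_comm]

lemma construction {V : Type} [Fintype V] (G : SimpleGraph V) (k : ℕ)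
    (hk : ∃ M : Finset (V × V), M.card = k ∧ (∀ e ∈ M, G.Adj e.1 e.2) ∧
      (M : Set (V × V)).Pairwise fun e f =>
        e.1 ≠ f.1 ∧ e.1 ≠ f.2 ∧ e.2 ≠ f.1 ∧ e.2 ≠ f.2) :
    ∃ (W : Type) (hW : Fintype W) (H : SimpleGraph W) (f : V ↪ W),
      (∀ u v : V, G.Adj u v → H.Adj (f u) (f v)) ∧
      IsPalindromic (@indepPoly W hW H) ∧
      indepPoly (corona G (⊥ : SimpleGraph (Fin 2))) = (1 + X) ^ k * @indepPoly W hW H := by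
  obtain ⟨M, hMc, hMadj, hMpw⟩ := hk
  set U : Finset V := (univ : Finset V) \ M.biUnion (fun e => ({e.1, e.2} : Finset V)) with hUdef
  have hconeH := indepPoly_cone (coneGraph G (pendRel (U := U) (M := M))) G
    (pendRel (U := U) (M := M)) (fun _ _ => Iff.rfl) (fun _ _ => Iff.rfl) (fun p q h => h)
  have hconeC := indepPoly_cone (corona G (⊥ : SimpleGraph (Fin 2))) G (fun u p => u = p.1)
    (fun _ _ => Iff.rfl) (fun _ _ => Iff.rfl) (fun p q h => h.2)
  -- the per-independent-set exponent facts
  have hkey : ∀ A : Finset V, (A : Set V).Pairwise (fun u v => ¬ G.Adj u v) →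
      2 * ((univ : Finset V) \ A).card
        = k + (((univ : Finset V) \ A).card
            + ((U \ A).card + (M.filter fun e => e.1 ∉ A ∧ e.2 ∉ A).card)) := by
    intro A hA
    have hmc := matched_count M A (fun e he => (hMadj e he).ne) hMpw
      (fun e he h => hA h.1 h.2 (hMadj e he).ne (hMadj e he))
    rw [← hUdef] at hmc
    omega
  have hempty : ((∅ : Finset V) : Set V).Pairwise (fun u v => ¬ G.Adj u v) := by simp
  -- degree parameter
  let cH : Finset V → ℕ := fun A =>
    (univ.filter (fun p : V ⊕ ({v : V // v ∈ U} ⊕ {e : V × V // e ∈ M}) =>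
        ∀ v ∈ A, ¬ pendRel v p)).card
  have hcHeq : ∀ A : Finset V, cH A
      = ((univ : Finset V) \ A).card
        + ((U \ A).card + (M.filter fun e => e.1 ∉ A ∧ e.2 ∉ A).card) :=
    fun A => pend_count U M A
  have huniv : ∀ A : Finset V, ((univ : Finset V) \ A).card + A.card = Fintype.card V := by
    intro A
    rw [Finset.card_sdiff_add_card_eq_card (Finset.subset_univ A), Finset.card_univ]
  have hd : ∀ A : Finset V, (A : Set V).Pairwise (fun u v => ¬ G.Adj u v) →
      cH A + 2 * A.card = cH ∅ := by
    intro A hA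
    have h1 := hkey A hA
    have h2 := hkey ∅ hempty
    have h3 := huniv A
    have h4 := huniv ∅
    have h5 : (#(∅ : Finset V)) = 0 := Finset.card_empty
    rw [hcHeq A, hcHeq ∅]
    omega
  obtain ⟨hdeg, hpal⟩ := palindromic_aux (fun A : Finset V =>
      (A : Set V).Pairwise (fun u v => ¬ G.Adj u v)) Finset.card cH (cH ∅) hd ∅ hempty
    (fun A _ => Finset.card_eq_zero)
  refine ⟨V ⊕ (V ⊕ ({v : V // v ∈ U} ⊕ {e : V × V // e ∈ M})), inferInstance,
    coneGraph G (pendRel (U := U) (M := M)), ⟨Sum.inl, Sum.inl_injective⟩, ?_, ?_, ?_⟩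
  · intro u v h
    exact h
  · intro j hj
    rw [hconeH] at hj ⊢
    rw [hdeg] at hj ⊢
    exact hpal j hj
  · rw [hconeC, hconeH, Finset.mul_sum]
    refine Finset.sum_congr rfl fun A _ => ?_
    by_cases hA : (A : Set V).Pairwise (fun u v => ¬ G.Adj u v)
    · rw [if_pos hA, if_pos hA]
      rw [corona_count A, hkey A hA, ← hcHeq A, pow_add]
      ring
    · rw [if_neg hA, if_neg hA, mul_zero]

lemma ite_inst' {α : Sort*} {p q : Prop} {i : Decidable p} {j : Decidable q} {a b a' b' : α}
    (h : p = q) (ha : a = a') (hb : b = b') : @ite α p i a b = @ite α q j a' b' := by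
  subst h ha hb; rw [Subsingleton.elim i j]

lemma indepPoly_congr {V W : Type*} [Fintype V] [Fintype W] (G : SimpleGraph V)
    (H : SimpleGraph W) (e : V ≃ W) (h : ∀ u v, G.Adj u v ↔ H.Adj (e u) (e v)) :
    indepPoly G = indepPoly H := by
  unfold indepPoly
  apply Fintype.sum_equiv (Equiv.finsetCongr e)
  intro s
  have hcond : ((s : Set V).Pairwise (fun u v => ¬ G.Adj u v)) =
      (((s.map e.toEmbedding : Finset W) : Set W).Pairwise (fun u v => ¬ H.Adj u v)) := by
    apply propext
    constructor
    · intro hp x hx y hy hxy hadj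
      rw [Finset.mem_coe, Finset.mem_map] at hx hy
      obtain ⟨u, hu, rfl⟩ := hx
      obtain ⟨v, hv, rfl⟩ := hy
      exact hp (Finset.mem_coe.mpr hu) (Finset.mem_coe.mpr hv)
        (fun hne => hxy (by rw [hne])) ((h u v).mpr hadj)
    · intro hp u hu v hv huv hadj
      rw [Finset.mem_coe] at hu hv
      exact hp (Finset.mem_coe.mpr (Finset.mem_map_of_mem _ hu))
        (Finset.mem_coe.mpr (Finset.mem_map_of_mem _ hv))
        (by simpa using huv) ((h u v).mp hadj)
  exact ite_inst' hcond (by rw [Equiv.finsetCongr_apply, Finset.card_map]) rfl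


end Helpers

set_option maxHeartbeats 1600000 in
theorem exists_symmetric_factor {V : Type*} [Fintype V] (G : SimpleGraph V) (k : ℕ)
    (hk : ∃ M : Finset (V × V), M.card = k ∧ (∀ e ∈ M, G.Adj e.1 e.2) ∧
      (M : Set (V × V)).Pairwise fun e f =>
        e.1 ≠ f.1 ∧ e.1 ≠ f.2 ∧ e.2 ≠ f.1 ∧ e.2 ≠ f.2) :
    ∃ (W : Type) (hW : Fintype W) (H : SimpleGraph W) (f : V ↪ W),
      (∀ u v : V, G.Adj u v → H.Adj (f u) (f v)) ∧
      IsPalindromic (@indepPoly W hW H) ∧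
      indepPoly (corona G (⊥ : SimpleGraph (Fin 2))) = (1 + X) ^ k * @indepPoly W hW H := by
  
  obtain ⟨M, hMc, hMadj, hMpw⟩ := hk
  set n := Fintype.card V with hn
  set e : V ≃ Fin n := Fintype.equivFin V with he
  set G' : SimpleGraph (Fin n) := SimpleGraph.comap (⇑e.symm) G with hG'
  have hGadj : ∀ u v : V, G.Adj u v ↔ G'.Adj (e u) (e v) := by
    intro u v
    simp [hG', SimpleGraph.comap]
  have hk' : ∃ M' : Finset (Fin n × Fin n), M'.card = k ∧ (∀ f ∈ M', G'.Adj f.1 f.2) ∧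
      (M' : Set (Fin n × Fin n)).Pairwise fun a b =>
        a.1 ≠ b.1 ∧ a.1 ≠ b.2 ∧ a.2 ≠ b.1 ∧ a.2 ≠ b.2 := by
    refine ⟨M.image (Prod.map e e), ?_, ?_, ?_⟩
    · rw [Finset.card_image_of_injective _ (e.injective.prodMap e.injective), hMc]
    · intro f hf
      rw [Finset.mem_image] at hf
      obtain ⟨a, ha, rfl⟩ := hf
      exact (hGadj a.1 a.2).mp (hMadj a ha)
    · intro x hx y hy hxy
      rw [Finset.coe_image, Set.mem_image] at hx hy
      obtain ⟨a, ha, rfl⟩ := hx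
      obtain ⟨b, hb, rfl⟩ := hy
      have hab : a ≠ b := fun hab => hxy (by rw [hab])
      obtain ⟨p1, p2, p3, p4⟩ := hMpw ha hb hab
      exact ⟨fun hc => p1 (e.injective hc), fun hc => p2 (e.injective hc),
        fun hc => p3 (e.injective hc), fun hc => p4 (e.injective hc)⟩
  obtain ⟨W, hW, H, f', hadj', hpal, hid⟩ := construction G' k hk'
  refine ⟨W, hW, H, e.toEmbedding.trans f', ?_, hpal, ?_⟩
  · intro u v h
    exact hadj' (e u) (e v) ((hGadj u v).mp h)
  · rw [← hid]
    apply indepPoly_congr (corona G (⊥ : SimpleGraph (Fin 2)))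
      (corona G' (⊥ : SimpleGraph (Fin 2)))
      (Equiv.sumCongr e (Equiv.prodCongr e (Equiv.refl (Fin 2))))
    rintro (u | ⟨u, a⟩) (v | ⟨v, b⟩)
    · exact hGadj u v
    · show u = v ↔ e u = e v
      exact ⟨fun h => by rw [h], fun h => e.injective h⟩
    · show v = u ↔ e v = e u
      exact ⟨fun h => by rw [h], fun h => e.injective h⟩
    · show u = v ∧ _ ↔ e u = e v ∧ _
      constructor
      · rintro ⟨_, h⟩; exact h.elim
      · rintro ⟨_, h⟩; exact h.elim
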